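/- The infimum of f over all feasible permutation schedules for the full PFB instance that are ordered by the identity permutation (i.e., c_{i,1} ≤ c_{i,2} ≤ … ≤ c_{i,n} for all machines i) is attained, and it equals min_{t ∈ Γ, k ∈ B} g(n,t,k). -/

import Mathlib

/-- A PFB instance has `m+1` machines and `n+1` jobs. `FeasibleUpTo p b r J c` is
feasibility of the schedule `c` for the sub-instance `I_J` containing only the jobs
`0,…,J`: release dates are respected on the first machine, consecutive machines leave
enough processing time, two jobs of `I_J` with different completion times on a machine
differ by at least its processing time, and at most `b i` jobs of `I_J` complete at
any given time on machine `i`. -/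
def FeasibleUpTo {m n : ℕ} (p b : Fin (m + 1) → ℕ) (r : Fin (n + 1) → ℕ)
    (J : Fin (n + 1)) (c : Fin (m + 1) → Fin (n + 1) → ℕ) : Prop :=
  (∀ j ≤ J, r j + p 0 ≤ c 0 j) ∧
  (∀ (i : Fin m), ∀ j ≤ J, c i.castSucc j + p i.succ ≤ c i.succ j) ∧
  (∀ (i : Fin (m + 1)), ∀ j ≤ J, ∀ j' ≤ J,
      c i j ≠ c i j' → c i j + p i ≤ c i j' ∨ c i j' + p i ≤ c i j) ∧
  (∀ (i : Fin (m + 1)) (t : ℕ),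
      (Finset.univ.filter (fun j => j ≤ J ∧ c i j = t)).card ≤ b i)

/-- `Gamma p r i = { r j' + ∑_{i' ≤ i} λ_{i'}·p_{i'} | j' a job, λ_{i'} ∈ {1,…,n+1} }`. -/
def Gamma {m n : ℕ} (p : Fin (m + 1) → ℕ) (r : Fin (n + 1) → ℕ)
    (i : Fin (m + 1)) : Set ℕ :=
  { x | ∃ (j' : Fin (n + 1)) (lam : Fin (m + 1) → ℕ),
      (∀ i' ≤ i, 1 ≤ lam i' ∧ lam i' ≤ n + 1) ∧
      x = r j' + ∑ i' ∈ Finset.Iic i, lam i' * p i' }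

/-- `𝒮(J,t,k)`: feasible schedules for `I_J` that are ordered by the job indices,
correspond to the completion-time vector `t` and batch-size vector `k` (job `J`
completes machine `i` at time `t i` in a batch of exactly `k i` jobs of `I_J`),
and are Γ-active. -/
def SchedSet {m n : ℕ} (p b : Fin (m + 1) → ℕ) (r : Fin (n + 1) → ℕ)
    (J : Fin (n + 1)) (t k : Fin (m + 1) → ℕ) :
    Set (Fin (m + 1) → Fin (n + 1) → ℕ) :=
  { c | FeasibleUpTo p b r J c ∧
      (∀ i : Fin (m + 1), ∀ j ≤ J, ∀ j' ≤ J, j ≤ j' → c i j ≤ c i j') ∧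
      (∀ i : Fin (m + 1), c i J = t i ∧
        (Finset.univ.filter (fun j' => j' ≤ J ∧ c i j' = t i)).card = k i) ∧
      (∀ i : Fin (m + 1), ∀ j ≤ J, c i j ∈ Gamma p r i) }

/-- The objective value `⊕_{j' ≤ J} f_{j'}(C_{j'})` of a schedule for `I_J`, where
`⊕` is the sum if `useSum = true` and the maximum otherwise. -/
noncomputable def obj {m n : ℕ} (useSum : Bool) (f : Fin (n + 1) → ℕ → ℝ)
    (J : Fin (n + 1)) (c : Fin (m + 1) → Fin (n + 1) → ℕ) : ℝ :=
  if useSum then ∑ j ∈ Finset.Iic J, f j (c (Fin.last m) j)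
  else (Finset.Iic J).sup' ⟨J, Finset.mem_Iic.mpr le_rfl⟩
    fun j => f j (c (Fin.last m) j)

/-- The dynamic-programming value `g(J,t,k)`: the minimum (in `ℝ ∪ {+∞} = EReal`,
with `+∞` for an empty set) of the objective over all schedules in `𝒮(J,t,k)`. -/
noncomputable def g {m n : ℕ} (useSum : Bool) (p b : Fin (m + 1) → ℕ)
    (r : Fin (n + 1) → ℕ) (f : Fin (n + 1) → ℕ → ℝ) (J : Fin (n + 1))
    (t k : Fin (m + 1) → ℕ) : EReal :=
  sInf { x : EReal | ∃ c ∈ SchedSet p b r J t k, x = ((obj useSum f J c : ℝ) : EReal) }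


namespace Stmt8Aux



def Lmax (lb w : ℕ → ℕ) (nn j : ℕ) : ℕ :=
  ((Finset.range (nn+1)).filter (fun j'' => w j'' = w j)).sup lb

def rowAux (lb w : ℕ → ℕ) (nn pi : ℕ) : ℕ → ℕ
  | 0 => Lmax lb w nn 0
  | j+1 => if w (j+1) = w j then rowAux lb w nn pi j
           else max (Lmax lb w nn (j+1)) (rowAux lb w nn pi j + pi)

variable {lb w : ℕ → ℕ} {nn pi : ℕ}

lemma Lmax_congr {j j' : ℕ} (h : w j = w j') : Lmax lb w nn j = Lmax lb w nn j' := by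
  unfold Lmax; congr 1; apply Finset.filter_congr; intro x _; simp [h]

lemma lb_le_Lmax (hperW : ∀ j, w (min j nn) = w j) (hperL : ∀ j, lb (min j nn) = lb j)
    (j : ℕ) : lb j ≤ Lmax lb w nn j := by
  rw [← hperL j]
  apply Finset.le_sup
  simp only [Finset.mem_filter, Finset.mem_range]
  exact ⟨by omega, hperW j⟩

lemma Lmax_le_rowAux (j : ℕ) : Lmax lb w nn j ≤ rowAux lb w nn pi j := by
  induction j with
  | zero => simp [rowAux]
  | succ j ih =>
    by_cases h : w (j+1) = w j
    · rw [rowAux, if_pos h, Lmax_congr h]; exact ih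
    · rw [rowAux, if_neg h]; exact le_max_left _ _

lemma rowAux_le_succ (j : ℕ) : rowAux lb w nn pi j ≤ rowAux lb w nn pi (j+1) := by
  by_cases h : w (j+1) = w j
  · rw [rowAux, if_pos h]
  · rw [rowAux, if_neg h]; exact le_max_of_le_right (Nat.le_add_right _ _)

lemma rowAux_mono : Monotone (rowAux lb w nn pi) :=
  monotone_nat_of_le_succ rowAux_le_succ

lemma rowAux_sep : ∀ j' j, j ≤ j' → w j ≠ w j' →
    rowAux lb w nn pi j + pi ≤ rowAux lb w nn pi j' := by
  intro j'
  induction j' with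
  | zero =>
    intro j hj hne
    exact absurd (by rw [Nat.le_zero.mp hj]) hne
  | succ j' ih =>
    intro j hj hne
    by_cases hj' : j = j' + 1
    · exact absurd (by rw [hj']) hne
    have hjle : j ≤ j' := by omega
    by_cases h : w (j'+1) = w j'
    · rw [rowAux, if_pos h]
      exact ih j hjle (fun he => hne (he.trans h.symm))
    · rw [rowAux, if_neg h]
      exact le_max_of_le_right (Nat.add_le_add_right (rowAux_mono hjle) pi)

lemma rowAux_batch (hw : Monotone w) : ∀ j' j, j ≤ j' → w j = w j' →
    rowAux lb w nn pi j = rowAux lb w nn pi j' := by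
  intro j'
  induction j' with
  | zero => intro j hj _; rw [Nat.le_zero.mp hj]
  | succ j' ih =>
    intro j hj he
    by_cases hj' : j = j' + 1
    · rw [hj']
    have hjle : j ≤ j' := by omega
    have h1 : w j ≤ w j' := hw hjle
    have h2 : w j' ≤ w (j'+1) := hw (Nat.le_succ j')
    have h : w (j'+1) = w j' := by omega
    rw [rowAux, if_pos h]
    exact ih j hjle (by omega)

lemma rowAux_le (hw : Monotone w) (hlb : ∀ j, lb j ≤ w j)
    (hsep : ∀ j j', w j ≠ w j' → w j + pi ≤ w j' ∨ w j' + pi ≤ w j) :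
    ∀ j, rowAux lb w nn pi j ≤ w j := by
  have hL : ∀ j, Lmax lb w nn j ≤ w j := by
    intro j
    apply Finset.sup_le
    intro j'' hj''
    simp only [Finset.mem_filter, Finset.mem_range] at hj''
    exact hj''.2 ▸ hlb j''
  intro j
  induction j with
  | zero => exact hL 0
  | succ j ih =>
    by_cases h : w (j+1) = w j
    · rw [rowAux, if_pos h, h]; exact ih
    · rw [rowAux, if_neg h]
      refine max_le (hL (j+1)) ?_
      have h1 : w j ≤ w (j+1) := hw (Nat.le_succ j)
      rcases hsep (j+1) j h with h2 | h2 <;> omega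

lemma rowAux_form (hperW : ∀ j, w (min j nn) = w j) : ∀ j, ∃ j₀ ≤ nn, ∃ μ ≤ j,
    rowAux lb w nn pi j = lb j₀ + μ * pi := by
  have hL : ∀ j, ∃ j₀ ≤ nn, Lmax lb w nn j = lb j₀ := by
    intro j
    have hne : ((Finset.range (nn+1)).filter (fun j'' => w j'' = w j)).Nonempty := by
      refine ⟨min j nn, ?_⟩
      simp only [Finset.mem_filter, Finset.mem_range]
      exact ⟨by omega, hperW j⟩
    obtain ⟨j₀, hj₀, hj₀e⟩ := Finset.exists_mem_eq_sup _ hne lb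
    simp only [Finset.mem_filter, Finset.mem_range] at hj₀
    exact ⟨j₀, by omega, hj₀e⟩
  intro j
  induction j with
  | zero =>
    obtain ⟨j₀, h1, h2⟩ := hL 0
    exact ⟨j₀, h1, 0, le_rfl, by simp [rowAux, h2]⟩
  | succ j ih =>
    by_cases h : w (j+1) = w j
    · obtain ⟨j₀, h1, μ, h2, h3⟩ := ih
      rw [rowAux, if_pos h]
      exact ⟨j₀, h1, μ, by omega, h3⟩
    · rw [rowAux, if_neg h]
      rcases max_choice (Lmax lb w nn (j+1)) (rowAux lb w nn pi j + pi) with hm | hm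
      · obtain ⟨j₀, h1, h2⟩ := hL (j+1)
        exact ⟨j₀, h1, 0, Nat.zero_le _, by rw [hm, h2]; ring⟩
      · obtain ⟨j₀, h1, μ, h2, h3⟩ := ih
        exact ⟨j₀, h1, μ+1, by omega, by rw [hm, h3]; ring⟩

def clampF (k j : ℕ) : Fin (k+1) := ⟨min j k, by omega⟩

lemma clampF_coe {k : ℕ} (j : Fin (k+1)) : clampF k j.val = j := by
  apply Fin.ext; simp [clampF]; omega

lemma clampF_min (k j : ℕ) : clampF k (min j k) = clampF k j := by
  apply Fin.ext; simp [clampF]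

lemma clampF_mono {k : ℕ} : Monotone (clampF k) := by
  intro a b hab; simp only [clampF, Fin.mk_le_mk]; omega

lemma clampF_zero (k : ℕ) : clampF k 0 = 0 := by
  apply Fin.ext; simp [clampF]

section Act

variable {m n : ℕ} (p b : Fin (m+1) → ℕ) (r : Fin (n+1) → ℕ)
  (c : Fin (m+1) → Fin (n+1) → ℕ)

/-- lower bounds for machine `i` (before adding `p i`). -/
def LB : ℕ → ℕ → ℕ
  | 0 => fun j => r (clampF n j)
  | i+1 => fun j =>
      rowAux (fun x => LB i x + p (clampF m i)) (fun x => c (clampF m i) (clampF n x))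
        n (p (clampF m i)) (min j n)

/-- the activated schedule, machine `i`. -/
def act (i : ℕ) : ℕ → ℕ :=
  rowAux (fun x => LB p r c i x + p (clampF m i)) (fun x => c (clampF m i) (clampF n x))
    n (p (clampF m i))

lemma LB_succ (i : ℕ) : LB p r c (i+1) = fun j => act p r c i (min j n) := rfl

variable {p b r c} in
lemma W_mono (hm : ∀ i, Monotone (c i)) (I : Fin (m+1)) :
    Monotone (fun x => c I (clampF n x)) := fun _ _ hab => hm I (clampF_mono hab)

lemma LB_per : ∀ i x, LB p r c i (min x n) = LB p r c i x
  | 0, x => by simp [LB, clampF_min]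
  | i+1, x => by simp [LB_succ, Nat.min_assoc]

lemma LB_le_act (i : ℕ) (x : ℕ) :
    LB p r c i x + p (clampF m i) ≤ act p r c i x :=
  le_trans
    (lb_le_Lmax (lb := fun x => LB p r c i x + p (clampF m i))
      (w := fun x => c (clampF m i) (clampF n x)) (nn := n)
      (fun x' => by simp only [clampF_min]) (fun x' => by simp only [LB_per]) x)
    (Lmax_le_rowAux (lb := fun x => LB p r c i x + p (clampF m i))
      (w := fun x => c (clampF m i) (clampF n x)) (nn := n) (pi := p (clampF m i)) x)

lemma act_mono (i : ℕ) : Monotone (act p r c i) := rowAux_mono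

variable {p b r c} in
lemma act_le (hc : FeasibleUpTo p b r (Fin.last n) c) (hm : ∀ i, Monotone (c i)) :
    ∀ i, i ≤ m → ∀ x, act p r c i x ≤ c (clampF m i) (clampF n x) := by
  intro i
  induction i with
  | zero =>
    intro _ x
    refine rowAux_le (W_mono hm _) ?_ ?_ x
    · intro x'
      have := hc.1 (clampF n x') (Fin.le_last _)
      simpa [LB, clampF_zero] using this
    · intro x' x'' hne
      exact hc.2.2.1 (clampF m 0) (clampF n x') (Fin.le_last _) (clampF n x'')
        (Fin.le_last _) hne
  | succ i ih =>
    intro hi x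
    refine rowAux_le (W_mono hm _) ?_ ?_ x
    · intro x'
      rw [LB_succ]
      have h1 : act p r c i (min x' n) ≤ c (clampF m i) (clampF n x') := by
        have := ih (by omega) (min x' n)
        rwa [clampF_min] at this
      set iF : Fin m := ⟨i, by omega⟩ with hiF
      have hcs : iF.castSucc = clampF m i := by
        apply Fin.ext; simp [clampF, hiF] <;> omega
      have hss : iF.succ = clampF m (i+1) := by
        apply Fin.ext; simp [clampF, hiF] <;> omega
      have h2 := hc.2.1 iF (clampF n x') (Fin.le_last _)
      rw [hcs, hss] at h2
      exact le_trans (Nat.add_le_add_right h1 _) h2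
    · intro x' x'' hne
      exact hc.2.2.1 (clampF m (i+1)) (clampF n x') (Fin.le_last _) (clampF n x'')
        (Fin.le_last _) hne

lemma Iic_clampF_zero : Finset.Iic (clampF m 0) = {(clampF m 0 : Fin (m+1))} := by
  ext y; rw [Finset.mem_Iic, Finset.mem_singleton, Fin.le_def, Fin.ext_iff]
  show y.val ≤ min 0 m ↔ y.val = min 0 m
  omega

lemma Iic_clampF_succ (i : ℕ) (hi : i + 1 ≤ m) :
    Finset.Iic (clampF m (i+1)) = insert (clampF m (i+1)) (Finset.Iic (clampF m i)) := by
  ext y; simp [Finset.mem_Iic, Fin.le_def, Fin.ext_iff, clampF]; omega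

variable {p r c} in
lemma act_mem_Gamma : ∀ i, i ≤ m → ∀ x, x ≤ n →
    act p r c i x ∈ Gamma p r (clampF m i) := by
  intro i
  induction i with
  | zero =>
    intro _ x hx
    obtain ⟨j₀, hj₀, μ, hμ, heq⟩ := rowAux_form
      (lb := fun x' => LB p r c 0 x' + p (clampF m 0))
      (w := fun x' => c (clampF m 0) (clampF n x')) (nn := n) (pi := p (clampF m 0))
      (fun x' => by simp only [clampF_min]) x
    have hact0 : act p r c 0 x = LB p r c 0 j₀ + p (clampF m 0) + μ * p (clampF m 0) := heq
    refine ⟨clampF n j₀, fun _ => μ + 1,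
      fun i' _ => ⟨Nat.succ_le_succ (Nat.zero_le _), Nat.succ_le_succ (hμ.trans hx)⟩, ?_⟩
    rw [Iic_clampF_zero, Finset.sum_singleton, hact0]
    show r (clampF n j₀) + p (clampF m 0) + μ * p (clampF m 0)
      = r (clampF n j₀) + (μ + 1) * p (clampF m 0)
    ring
  | succ i ih =>
    intro hi x hx
    obtain ⟨j₀, hj₀, μ, hμ, heq⟩ := rowAux_form
      (lb := fun x' => LB p r c (i+1) x' + p (clampF m (i+1)))
      (w := fun x' => c (clampF m (i+1)) (clampF n x')) (nn := n) (pi := p (clampF m (i+1)))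
      (fun x' => by simp only [clampF_min]) x
    have hact1 : act p r c (i+1) x
        = LB p r c (i+1) j₀ + p (clampF m (i+1)) + μ * p (clampF m (i+1)) := heq
    have hLB : LB p r c (i+1) j₀ = act p r c i j₀ := by
      rw [LB_succ]; simp [Nat.min_eq_left hj₀]
    obtain ⟨j', lam, hlam, hact⟩ := ih (by omega) j₀ hj₀
    have hIv : (clampF m (i+1)).val = i + 1 := by simp [clampF]; omega
    have hprev : (clampF m i).val = i := by simp [clampF]; omega
    have hnm : clampF m (i+1) ∉ Finset.Iic (clampF m i) := by
      simp [Finset.mem_Iic, Fin.le_def, hIv, hprev]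
    refine ⟨j', Function.update lam (clampF m (i+1)) (μ+1), ?_, ?_⟩
    · intro i' hi'
      by_cases hii : i' = clampF m (i+1)
      · subst hii; rw [Function.update_self]
        exact ⟨Nat.succ_le_succ (Nat.zero_le _), Nat.succ_le_succ (hμ.trans hx)⟩
      · rw [Function.update_of_ne hii]
        refine hlam i' ?_
        have h1 : i'.val ≤ i + 1 := by rw [← hIv]; exact hi'
        have h2 : i'.val ≠ i + 1 := fun h => hii (Fin.ext (h.trans hIv.symm))
        rw [Fin.le_def, hprev]; omega
    · rw [Iic_clampF_succ i hi, Finset.sum_insert hnm, Function.update_self]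
      have hsum : ∑ i' ∈ Finset.Iic (clampF m i),
            Function.update lam (clampF m (i+1)) (μ+1) i' * p i'
          = ∑ i' ∈ Finset.Iic (clampF m i), lam i' * p i' := by
        refine Finset.sum_congr rfl fun y hy => ?_
        rw [Function.update_of_ne (ne_of_mem_of_not_mem hy hnm)]
      rw [hsum, hact1, hLB, hact]
      ring

variable {p r c} in
lemma act_mem_Gamma' (i : Fin (m+1)) (j : Fin (n+1)) :
    act p r c i.val j.val ∈ Gamma p r i := by
  have := act_mem_Gamma (p := p) (r := r) (c := c) i.val (by omega) j.val (by omega)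
  rwa [clampF_coe] at this

variable {p b r c} in
lemma act_sep (hm : ∀ i, Monotone (c i)) (I : Fin (m+1)) (x x' : ℕ)
    (hne : act p r c I.val x ≠ act p r c I.val x') :
    act p r c I.val x + p I ≤ act p r c I.val x' ∨
    act p r c I.val x' + p I ≤ act p r c I.val x := by
  have hw : Monotone (fun y => c (clampF m I.val) (clampF n y)) := W_mono hm _
  have hcl : clampF m I.val = I := clampF_coe I
  rcases le_total x x' with h | h
  · by_cases hb : (fun y => c (clampF m I.val) (clampF n y)) x
        = (fun y => c (clampF m I.val) (clampF n y)) x'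
    · exact absurd (rowAux_batch (lb := fun y => LB p r c I.val y + p (clampF m I.val))
        (pi := p (clampF m I.val)) hw x' x h hb) hne
    · left
      have := rowAux_sep (lb := fun y => LB p r c I.val y + p (clampF m I.val))
        (w := fun y => c (clampF m I.val) (clampF n y)) (nn := n)
        (pi := p (clampF m I.val)) x' x h hb
      have h2 : act p r c I.val x + p (clampF m I.val) ≤ act p r c I.val x' := this
      rwa [hcl] at h2
  · by_cases hb : (fun y => c (clampF m I.val) (clampF n y)) x'
        = (fun y => c (clampF m I.val) (clampF n y)) x
    · exact absurd (rowAux_batch (lb := fun y => LB p r c I.val y + p (clampF m I.val))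
        (pi := p (clampF m I.val)) hw x x' h hb).symm hne
    · right
      have := rowAux_sep (lb := fun y => LB p r c I.val y + p (clampF m I.val))
        (w := fun y => c (clampF m I.val) (clampF n y)) (nn := n)
        (pi := p (clampF m I.val)) x x' h hb
      have h2 : act p r c I.val x' + p (clampF m I.val) ≤ act p r c I.val x := this
      rwa [hcl] at h2

variable {p b r c} in
lemma act_batch_iff (hp : ∀ i, 1 ≤ p i) (hm : ∀ i, Monotone (c i)) (I : Fin (m+1))
    (x x' : ℕ) :
    act p r c I.val x = act p r c I.val x' ↔
    c I (clampF n x) = c I (clampF n x') := by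
  have hw : Monotone (fun y => c (clampF m I.val) (clampF n y)) := W_mono hm _
  have hcl : clampF m I.val = I := clampF_coe I
  constructor
  · intro h
    by_contra hb
    have hb' : ¬ (fun y => c (clampF m I.val) (clampF n y)) x
        = (fun y => c (clampF m I.val) (clampF n y)) x' := by
      simpa [hcl] using hb
    have hpI := hp I
    rcases le_total x x' with hle | hle
    · have := rowAux_sep (lb := fun y => LB p r c I.val y + p (clampF m I.val))
        (w := fun y => c (clampF m I.val) (clampF n y)) (nn := n)
        (pi := p (clampF m I.val)) x' x hle hb'
      have h2 : act p r c I.val x + p (clampF m I.val) ≤ act p r c I.val x' := this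
      rw [hcl] at h2
      omega
    · have := rowAux_sep (lb := fun y => LB p r c I.val y + p (clampF m I.val))
        (w := fun y => c (clampF m I.val) (clampF n y)) (nn := n)
        (pi := p (clampF m I.val)) x x' hle (Ne.symm hb')
      have h2 : act p r c I.val x' + p (clampF m I.val) ≤ act p r c I.val x := this
      rw [hcl] at h2
      omega
  · intro h
    have h' : (fun y => c (clampF m I.val) (clampF n y)) x
        = (fun y => c (clampF m I.val) (clampF n y)) x' := by
      simpa [hcl] using h
    rcases le_total x x' with hle | hle
    · exact rowAux_batch (lb := fun y => LB p r c I.val y + p (clampF m I.val))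
        (pi := p (clampF m I.val)) hw x' x hle h'
    · exact (rowAux_batch (lb := fun y => LB p r c I.val y + p (clampF m I.val))
        (pi := p (clampF m I.val)) hw x x' hle h'.symm).symm

end Act

section Final

variable {m n : ℕ}

lemma obj_mono (useSum : Bool) (f : Fin (n+1) → ℕ → ℝ) (hf : ∀ j, Monotone (f j))
    (c1 c2 : Fin (m+1) → Fin (n+1) → ℕ)
    (h : ∀ j, c1 (Fin.last m) j ≤ c2 (Fin.last m) j) :
    obj useSum f (Fin.last n) c1 ≤ obj useSum f (Fin.last n) c2 := by
  rcases useSum with _ | _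
  · simp only [obj, Bool.false_eq_true, if_false]
    refine Finset.sup'_le _ _ fun j hj => ?_
    exact le_trans (hf j (h j)) (Finset.le_sup' (fun j => f j (c2 (Fin.last m) j)) hj)
  · simp only [obj, if_true]
    exact Finset.sum_le_sum fun j _ => hf j (h j)

lemma Iic_zero_fin : (Finset.Iic (0 : Fin (m+1))) = {0} := by
  ext y; rw [Finset.mem_Iic, Finset.mem_singleton, Fin.le_def, Fin.ext_iff, Fin.val_zero]
  omega

lemma Iic_succ_fin (i : Fin m) :
    (Finset.Iic (i.succ : Fin (m+1))) = insert i.succ (Finset.Iic i.castSucc) := by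
  ext y; simp [Finset.mem_Iic, Fin.le_def, Fin.ext_iff]; omega

lemma succ_not_mem_Iic (i : Fin m) : (i.succ : Fin (m+1)) ∉ Finset.Iic i.castSucc := by
  simp [Finset.mem_Iic, Fin.le_def]

lemma cstar_props (p b : Fin (m+1) → ℕ) (r : Fin (n+1) → ℕ) (hp : ∀ i, 1 ≤ p i)
    (hb : ∀ i, 1 ≤ b i ∧ b i ≤ n + 1) :
    FeasibleUpTo p b r (Fin.last n)
      (fun i j => (Finset.univ.sup r) + (j.val+1) * ∑ i' ∈ Finset.Iic i, p i') ∧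
    (∀ i, Monotone (fun j : Fin (n+1) =>
      (Finset.univ.sup r) + (j.val+1) * ∑ i' ∈ Finset.Iic i, p i')) := by
  have hS : ∀ i : Fin (m+1), p i ≤ ∑ i' ∈ Finset.Iic i, p i' :=
    fun i => Finset.single_le_sum (fun _ _ => Nat.zero_le _) (Finset.mem_Iic.mpr le_rfl)
  constructor
  · refine ⟨?_, ?_, ?_, ?_⟩
    · intro j _
      have h1 : r j ≤ Finset.univ.sup r := Finset.le_sup (Finset.mem_univ j)
      have h2 : ∑ i' ∈ Finset.Iic (0 : Fin (m+1)), p i' = p 0 := by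
        rw [Iic_zero_fin, Finset.sum_singleton]
      simp only [h2]
      have h3 : p 0 ≤ (j.val+1) * p 0 := Nat.le_mul_of_pos_left _ (by omega)
      omega
    · intro i j _
      simp only
      rw [Iic_succ_fin, Finset.sum_insert (succ_not_mem_Iic i)]
      have key : (j.val+1) * (p i.succ + ∑ i' ∈ Finset.Iic i.castSucc, p i')
          = (j.val+1) * p i.succ + (j.val+1) * ∑ i' ∈ Finset.Iic i.castSucc, p i' := by
        ring
      have h2 : p i.succ ≤ (j.val+1) * p i.succ := Nat.le_mul_of_pos_left _ (by omega)
      omega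
    · intro i j _ j' _ hne
      simp only at hne ⊢
      set S := ∑ i' ∈ Finset.Iic i, p i' with hSdef
      have h1 : p i ≤ S := hS i
      rcases lt_trichotomy j.val j'.val with h | h | h
      · left
        have h2 : (j.val+2) * S ≤ (j'.val+1) * S := Nat.mul_le_mul_right S (by omega)
        have h3 : (j.val+1) * S + S = (j.val+2) * S := by ring
        omega
      · exact absurd (by rw [Fin.ext h]) hne
      · right
        have h2 : (j'.val+2) * S ≤ (j.val+1) * S := Nat.mul_le_mul_right S (by omega)
        have h3 : (j'.val+1) * S + S = (j'.val+2) * S := by ring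
        omega
    · intro i t
      have hcard : (Finset.univ.filter (fun j : Fin (n+1) =>
          j ≤ Fin.last n ∧ Finset.univ.sup r + (j.val+1) * ∑ i' ∈ Finset.Iic i, p i' = t)).card ≤ 1 := by
        refine Finset.card_le_one.mpr fun a ha a' ha' => ?_
        simp only [Finset.mem_filter] at ha ha'
        have he : (a.val+1) * ∑ i' ∈ Finset.Iic i, p i'
            = (a'.val+1) * ∑ i' ∈ Finset.Iic i, p i' := by omega
        have hpos : 0 < ∑ i' ∈ Finset.Iic i, p i' := lt_of_lt_of_le (hp i) (hS i)
        have := Nat.eq_of_mul_eq_mul_right hpos he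
        exact Fin.ext (by omega)
      exact le_trans hcard (hb i).1
  · intro i j j' hjj'
    simp only
    have : j.val ≤ j'.val := hjj'
    exact Nat.add_le_add_left (Nat.mul_le_mul_right _ (by omega)) _

end Final

end Stmt8Aux

/-- the infimum of the objective over all feasible schedules for the full
instance (`J = Fin.last n`) that are permutation schedules ordered by the identity
permutation is attained by some schedule `c₀`, and its value equals
`min_{t ∈ Γ, k ∈ B} g(n,t,k)`. -/

theorem stmt8 {m n : ℕ} (useSum : Bool) (p b : Fin (m + 1) → ℕ)
    (r : Fin (n + 1) → ℕ) (hp : ∀ i, 1 ≤ p i) (hb : ∀ i, 1 ≤ b i ∧ b i ≤ n + 1)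
    (f : Fin (n + 1) → ℕ → ℝ) (hf : ∀ j, Monotone (f j)) :
    ∃ c₀ : Fin (m + 1) → Fin (n + 1) → ℕ,
      FeasibleUpTo p b r (Fin.last n) c₀ ∧ (∀ i : Fin (m + 1), Monotone (c₀ i)) ∧
      (∀ c : Fin (m + 1) → Fin (n + 1) → ℕ,
        FeasibleUpTo p b r (Fin.last n) c → (∀ i : Fin (m + 1), Monotone (c i)) →
        obj useSum f (Fin.last n) c₀ ≤ obj useSum f (Fin.last n) c) ∧
      ((obj useSum f (Fin.last n) c₀ : ℝ) : EReal) =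
        sInf { x : EReal | ∃ t k : Fin (m + 1) → ℕ,
          (∀ i, t i ∈ Gamma p r i) ∧ (∀ i, 1 ≤ k i ∧ k i ≤ b i) ∧
          x = g useSum p b r f (Fin.last n) t k } := by
  classical
  -- the set of Γ-active feasible monotone schedules
  set A : Set (Fin (m+1) → Fin (n+1) → ℕ) :=
    {c' | FeasibleUpTo p b r (Fin.last n) c' ∧ (∀ i, Monotone (c' i)) ∧
      ∀ i j, c' i j ∈ Gamma p r i} with hA
  -- activation lemma
  have hactiv : ∀ c : Fin (m+1) → Fin (n+1) → ℕ, FeasibleUpTo p b r (Fin.last n) c →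
      (∀ i, Monotone (c i)) → ∃ c' ∈ A, (∀ i j, c' i j ≤ c i j) := by
    intro c hc hm
    have hle : ∀ (i : Fin (m+1)) (j : Fin (n+1)),
        Stmt8Aux.act p r c i.val j.val ≤ c i j := by
      intro i j
      have := Stmt8Aux.act_le hc hm i.val (by omega) j.val
      rwa [Stmt8Aux.clampF_coe, Stmt8Aux.clampF_coe] at this
    refine ⟨fun i j => Stmt8Aux.act p r c i.val j.val, ⟨⟨?_, ?_, ?_, ?_⟩, ?_, ?_⟩, ?_⟩
    · -- release dates
      intro j _
      have h := Stmt8Aux.LB_le_act p r c 0 j.val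
      rw [Stmt8Aux.clampF_zero] at h
      simp only [Stmt8Aux.LB, Stmt8Aux.clampF_coe] at h
      simpa using h
    · -- consecutive machines
      intro i j _
      have h := Stmt8Aux.LB_le_act p r c (i.val + 1) j.val
      simp only [Stmt8Aux.LB_succ] at h
      rw [Nat.min_eq_left (by omega : j.val ≤ n)] at h
      have hclam : Stmt8Aux.clampF m (i.val+1) = i.succ := by
        apply Fin.ext; simp [Stmt8Aux.clampF]
      rw [hclam] at h
      show Stmt8Aux.act p r c i.castSucc.val j.val + p i.succ
        ≤ Stmt8Aux.act p r c i.succ.val j.val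
      have h1 : i.castSucc.val = i.val := rfl
      have h2 : i.succ.val = i.val + 1 := rfl
      rw [h1, h2]
      exact h
    · -- separation
      intro i j _ j' _ hne
      exact Stmt8Aux.act_sep hm i j.val j'.val hne
    · -- batch capacity
      intro i t
      simp only
      by_cases hE : (Finset.univ.filter (fun j : Fin (n+1) =>
          j ≤ Fin.last n ∧ Stmt8Aux.act p r c i.val j.val = t)).Nonempty
      · obtain ⟨j₀, hj₀⟩ := hE
        simp only [Finset.mem_filter] at hj₀
        have hEq : (Finset.univ.filter (fun j : Fin (n+1) =>
              j ≤ Fin.last n ∧ Stmt8Aux.act p r c i.val j.val = t))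
            = Finset.univ.filter (fun j => j ≤ Fin.last n ∧ c i j = c i j₀) := by
          ext j
          simp only [Finset.mem_filter, Finset.mem_univ, true_and]
          constructor
          · rintro ⟨h1, h2⟩
            refine ⟨h1, ?_⟩
            have h3 := (Stmt8Aux.act_batch_iff hp hm i j.val j₀.val).mp
              (h2.trans hj₀.2.2.symm)
            rwa [Stmt8Aux.clampF_coe, Stmt8Aux.clampF_coe] at h3
          · rintro ⟨h1, h2⟩
            refine ⟨h1, ?_⟩
            have h3 := (Stmt8Aux.act_batch_iff (r := r) hp hm i j.val j₀.val).mpr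
              (by rwa [Stmt8Aux.clampF_coe, Stmt8Aux.clampF_coe])
            exact h3.trans hj₀.2.2
        rw [hEq]
        exact hc.2.2.2 i (c i j₀)
      · rw [Finset.not_nonempty_iff_eq_empty] at hE
        rw [hE]
        simp
    · -- monotone
      intro i j j' hjj'
      exact Stmt8Aux.act_mono p r c i.val hjj'
    · -- Γ-active
      intro i j
      exact Stmt8Aux.act_mem_Gamma' i j
    · -- dominated
      intro i j
      exact hle i j
  -- A is finite
  have hGbound : ∀ (i : Fin (m+1)) (x : ℕ), x ∈ Gamma p r i →
      x ≤ Finset.univ.sup r + (n+1) * ∑ i', p i' := by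
    rintro i x ⟨j', lam, hlam, rfl⟩
    have h1 : r j' ≤ Finset.univ.sup r := Finset.le_sup (Finset.mem_univ _)
    have h2 : ∑ i' ∈ Finset.Iic i, lam i' * p i' ≤ ∑ i' ∈ Finset.Iic i, (n+1) * p i' :=
      Finset.sum_le_sum fun y hy =>
        Nat.mul_le_mul_right _ (hlam y (Finset.mem_Iic.mp hy)).2
    have h3 : ∑ i' ∈ Finset.Iic i, (n+1) * p i' ≤ ∑ i' : Fin (m+1), (n+1) * p i' :=
      Finset.sum_le_sum_of_subset (Finset.subset_univ _)
    have h4 : ∑ i' : Fin (m+1), (n+1) * p i' = (n+1) * ∑ i', p i' := by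
      rw [Finset.mul_sum]
    omega
  have hAfin : A.Finite := by
    have hbig : ({c' : Fin (m+1) → Fin (n+1) → ℕ |
        ∀ i j, c' i j ≤ Finset.univ.sup r + (n+1) * ∑ i', p i'}).Finite := by
      have h1 : ∀ _i : Fin (m+1), ({f : Fin (n+1) → ℕ |
          ∀ j, f j ≤ Finset.univ.sup r + (n+1) * ∑ i', p i'}).Finite := by
        intro _
        refine (Set.Finite.pi (fun _j : Fin (n+1) =>
          Set.finite_Iic (Finset.univ.sup r + (n+1) * ∑ i', p i'))).subset ?_
        intro f hf
        simp only [Set.mem_pi, Set.mem_univ, forall_true_left, Set.mem_Iic]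
        exact fun j => hf j
      refine (Set.Finite.pi h1).subset ?_
      intro c hc
      simp only [Set.mem_pi, Set.mem_univ, forall_true_left, Set.mem_setOf_eq]
      exact fun i => hc i
    exact hbig.subset fun c' hc' i j => hGbound i _ (hc'.2.2 i j)
  -- A is nonempty
  obtain ⟨hcsf, hcsm⟩ := Stmt8Aux.cstar_props p b r hp hb
  obtain ⟨cact, hcactA, _⟩ := hactiv _ hcsf hcsm
  have hAne : A.Nonempty := ⟨cact, hcactA⟩
  -- minimize over A
  obtain ⟨c₀, hc₀A, hc₀min⟩ :=
    Set.exists_min_image A (obj useSum f (Fin.last n)) hAfin hAne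
  have hopt : ∀ c : Fin (m+1) → Fin (n+1) → ℕ,
      FeasibleUpTo p b r (Fin.last n) c → (∀ i, Monotone (c i)) →
      obj useSum f (Fin.last n) c₀ ≤ obj useSum f (Fin.last n) c := by
    intro c hc hm
    obtain ⟨c', hc'A, hle⟩ := hactiv c hc hm
    exact le_trans (hc₀min c' hc'A)
      (Stmt8Aux.obj_mono useSum f hf c' c (fun j => hle _ j))
  refine ⟨c₀, hc₀A.1, hc₀A.2.1, hopt, ?_⟩
  -- the equality with the DP value
  refine le_antisymm ?_ ?_
  · -- lower bound
    refine le_sInf ?_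
    rintro x ⟨t, k, ht, hk, rfl⟩
    unfold g
    refine le_sInf ?_
    rintro y ⟨c, hcS, rfl⟩
    refine EReal.coe_le_coe_iff.mpr ?_
    refine hc₀min c ⟨hcS.1, ?_, ?_⟩
    · intro i j j' hjj'
      exact hcS.2.1 i j (Fin.le_last _) j' (Fin.le_last _) hjj'
    · intro i j
      exact hcS.2.2.2 i j (Fin.le_last _)
  · -- upper bound
    have hc₀S : c₀ ∈ SchedSet p b r (Fin.last n) (fun i => c₀ i (Fin.last n))
        (fun i => (Finset.univ.filter (fun j' => j' ≤ Fin.last n ∧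
          c₀ i j' = c₀ i (Fin.last n))).card) := by
      refine ⟨hc₀A.1, ?_, ?_, ?_⟩
      · intro i j _ j' _ hjj'
        exact hc₀A.2.1 i hjj'
      · intro i
        exact ⟨rfl, rfl⟩
      · intro i j _
        exact hc₀A.2.2 i j
    have hg : g useSum p b r f (Fin.last n) (fun i => c₀ i (Fin.last n))
        (fun i => (Finset.univ.filter (fun j' => j' ≤ Fin.last n ∧
          c₀ i j' = c₀ i (Fin.last n))).card)
        ≤ ((obj useSum f (Fin.last n) c₀ : ℝ) : EReal) := by
      unfold g
      exact sInf_le ⟨c₀, hc₀S, rfl⟩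
    refine le_trans (sInf_le ?_) hg
    refine ⟨fun i => c₀ i (Fin.last n),
      fun i => (Finset.univ.filter (fun j' => j' ≤ Fin.last n ∧
        c₀ i j' = c₀ i (Fin.last n))).card, ?_, ?_, rfl⟩
    · intro i
      exact hc₀A.2.2 i (Fin.last n)
    · intro i
      constructor
      · refine Finset.card_pos.mpr ⟨Fin.last n, ?_⟩
        simp
      · exact hc₀A.1.2.2.2 i (c₀ i (Fin.last n))
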